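/- arXiv:2306.10655 — 2 statements merged into one kernel-verified Lean document; each statement's English description precedes it below -/
import Mathlib

section
/- Let m ∈ ℤ_{≥0}, 0 < α < 1 and γ > 0. Then ∑_{k=0}^∞ α^k ((γ)_k / k!) k^m = (1−α)^{−γ} ∑_{l=0}^{m} S(m,l) (γ)_l (α/(1−α))^l, where the left-hand series converges absolutely (with the convention 0^0 = 1 for the k = 0, m = 0 term). -/
/-- Pochhammer symbol `(γ)_l = γ(γ+1)⋯(γ+l−1)`. -/
noncomputable def poch (γ : ℝ) (l : ℕ) : ℝ := ∏ i ∈ Finset.range l, (γ + i)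

/-- Stirling numbers of the second kind. -/
def stirling2 : ℕ → ℕ → ℕ
  | 0, 0 => 1
  | 0, _+1 => 0
  | _+1, 0 => 0
  | n+1, k+1 => (k+1) * stirling2 n (k+1) + stirling2 n k

lemma poch_zero (γ : ℝ) : poch γ 0 = 1 := by simp [poch]

lemma poch_succ (γ : ℝ) (k : ℕ) : poch γ (k+1) = poch γ k * (γ + k) :=
  Finset.prod_range_succ _ _

lemma poch_nonneg {γ : ℝ} (hγ : 0 < γ) (k : ℕ) : 0 ≤ poch γ k :=
  Finset.prod_nonneg fun i _ => by positivity

lemma poch_add (γ : ℝ) (l j : ℕ) : poch γ (l + j) = poch γ l * poch (γ + l) j := by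
  rw [poch, Finset.prod_range_add]
  congr 1
  refine Finset.prod_congr rfl fun i _ => ?_
  push_cast; ring

lemma summable_aux {β : ℝ} (hβ : 0 < β) (p : ℕ) {b : ℝ} (hb0 : 0 < b) (hb1 : b < 1) :
    Summable (fun k : ℕ => poch β k / (Nat.factorial k) * ((k : ℝ) + 1)^p * b^k) := by
  set f : ℕ → ℝ := fun k => poch β k / (Nat.factorial k) * ((k : ℝ) + 1)^p * b^k with hf
  have hr1 : (b + 1) / 2 < 1 := by linarith
  apply summable_of_ratio_norm_eventually_le hr1
  have t0 : Filter.Tendsto (fun k : ℕ => 1 / ((k : ℝ) + 1)) Filter.atTop (nhds 0) :=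
    tendsto_one_div_add_atTop_nhds_zero_nat
  have t1 : Filter.Tendsto (fun k : ℕ => (β + k) / ((k : ℝ) + 1)) Filter.atTop (nhds 1) := by
    have := (t0.const_mul (β - 1)).add_const 1
    simp only [mul_zero, zero_add] at this
    refine this.congr fun k => ?_
    have : ((k : ℝ) + 1) ≠ 0 := by positivity
    field_simp
    ring
  have t2 : Filter.Tendsto (fun k : ℕ => ((k : ℝ) + 2) / ((k : ℝ) + 1)) Filter.atTop (nhds 1) := by
    have := t0.add_const 1
    simp only [zero_add] at this
    refine this.congr fun k => ?_
    have : ((k : ℝ) + 1) ≠ 0 := by positivity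
    field_simp
    ring
  have t3 : Filter.Tendsto
      (fun k : ℕ => (β + k) / ((k : ℝ) + 1) * (((k : ℝ) + 2) / ((k : ℝ) + 1))^p * b)
      Filter.atTop (nhds b) := by
    have := (t1.mul (t2.pow p)).mul_const b
    simpa using this
  have hev : ∀ᶠ k : ℕ in Filter.atTop,
      (β + k) / ((k : ℝ) + 1) * (((k : ℝ) + 2) / ((k : ℝ) + 1))^p * b ≤ (b + 1) / 2 := by
    have hb2 : b < (b + 1) / 2 := by linarith
    filter_upwards [t3.eventually_lt_const hb2] with k hk using hk.le
  filter_upwards [hev] with k hk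
  have hfk : 0 ≤ f k := by
    have := poch_nonneg hβ k
    have : (0:ℝ) ≤ poch β k / (Nat.factorial k) := by positivity
    positivity
  have hfk1 : f (k+1) = f k * ((β + k) / ((k : ℝ) + 1) * (((k : ℝ) + 2) / ((k : ℝ) + 1))^p * b) := by
    simp only [hf, poch_succ, Nat.factorial_succ]
    have h1 : ((k:ℝ) + 1) ≠ 0 := by positivity
    have h2 : ((Nat.factorial k : ℝ)) ≠ 0 := by positivity
    push_cast
    rw [div_pow]
    field_simp
    ring
  rw [Real.norm_eq_abs, Real.norm_eq_abs, abs_of_nonneg hfk, hfk1, abs_of_nonneg]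
  · calc f k * ((β + k) / ((k : ℝ) + 1) * (((k : ℝ) + 2) / ((k : ℝ) + 1))^p * b)
        ≤ f k * ((b+1)/2) := by
          apply mul_le_mul_of_nonneg_left hk hfk
    _ = (b+1)/2 * f k := by ring
  · apply mul_nonneg hfk
    have : (0:ℝ) ≤ (β + k) / ((k : ℝ) + 1) := by positivity
    positivity

lemma hasSum_binom {γ : ℝ} (hγ : 0 < γ) {α : ℝ} (hα0 : 0 < α) (hα1 : α < 1) :
    HasSum (fun k : ℕ => α ^ k * poch γ k / (Nat.factorial k)) ((1 - α) ^ (-γ)) := by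
  set b : ℝ := (α + 1) / 2 with hb
  have hb0 : 0 < b := by positivity
  have hb1 : b < 1 := by rw [hb]; linarith
  have hαb : α < b := by rw [hb]; linarith
  set c : ℕ → ℝ := fun k => poch γ k / (Nat.factorial k) with hc
  have hc0 : ∀ k, 0 ≤ c k := fun k => by
    have := poch_nonneg hγ k; positivity
  have hcsucc : ∀ k : ℕ, c (k+1) * ((k:ℝ)+1) = c k * (γ + k) := by
    intro k
    simp only [hc, poch_succ, Nat.factorial_succ]
    have h2 : ((Nat.factorial k : ℝ)) ≠ 0 := by positivity
    push_cast
    field_simp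
  set t : Set ℝ := Set.Ioo (-b) b with ht
  have hto : IsOpen t := isOpen_Ioo
  have htc : IsPreconnected t := isPreconnected_Ioo
  set g : ℕ → ℝ → ℝ := fun n x => c n * x ^ n with hg
  set g' : ℕ → ℝ → ℝ := fun n x => c n * (n * x ^ (n - 1)) with hg'
  set u : ℕ → ℝ := fun n => c n * ((n:ℝ)+1) * b ^ n / b with hu
  have hus : Summable u := by
    have := (summable_aux hγ 1 hb0 hb1).div_const b
    refine this.congr fun n => ?_
    simp [hu, hc]
  have hgd : ∀ n y, y ∈ t → HasDerivAt (g n) (g' n y) y := by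
    intro n y _
    simpa [hg, hg', mul_comm] using (hasDerivAt_pow n y).const_mul (c n)
  have hbound : ∀ n (y : ℝ), y ∈ t → ‖g' n y‖ ≤ u n := by
    intro n y hy
    have hyb : |y| ≤ b := by
      rw [abs_le]; exact ⟨(hy.1).le, (hy.2).le⟩
    rcases n with _ | m
    · have h0 : ‖g' 0 y‖ = 0 := by simp [hg']
      rw [h0]
      show (0:ℝ) ≤ c 0 * ((0:ℕ)+1:ℝ) * b ^ (0:ℕ) / b
      have := hc0 0
      positivity
    · have h1 : ‖g' (m+1) y‖ = c (m+1) * ((m:ℝ)+1) * |y| ^ m := by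
        simp only [hg', Nat.add_sub_cancel]
        rw [Real.norm_eq_abs, abs_mul, abs_of_nonneg (hc0 _), abs_mul, abs_pow]
        rw [abs_of_nonneg (by positivity : (0:ℝ) ≤ ((m+1:ℕ):ℝ))]
        push_cast
        ring
      rw [h1]
      have h2 : |y| ^ m ≤ b ^ m := pow_le_pow_left₀ (abs_nonneg y) hyb m
      have h3 : c (m+1) * ((m:ℝ)+1) * |y| ^ m ≤ c (m+1) * ((m:ℝ)+1) * b ^ m := by
        apply mul_le_mul_of_nonneg_left h2
        have := hc0 (m+1); positivity
      refine h3.trans ?_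
      have : u (m+1) = c (m+1) * ((m:ℝ)+2) * b ^ m := by
        simp only [hu]
        field_simp
        push_cast
        ring
      rw [this]
      have := hc0 (m+1)
      have hbm : (0:ℝ) ≤ b ^ m := by positivity
      nlinarith [hc0 (m+1), hbm, mul_nonneg (hc0 (m+1)) hbm]
  have hg0 : Summable fun n => g n (0:ℝ) := by
    apply summable_of_finite_support
    apply Set.Finite.subset (Set.finite_singleton 0)
    intro n hn
    simp only [Function.mem_support, hg] at hn
    by_contra h
    rcases Nat.exists_eq_succ_of_ne_zero (by simpa using h) with ⟨m, rfl⟩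
    simp at hn
  have h0t : (0:ℝ) ∈ t := by constructor <;> simp [hb0] <;> linarith
  -- derivative of the sum
  have hF : ∀ y ∈ t, HasDerivAt (fun z => ∑' n, g n z) (∑' n, g' n y) y :=
    fun y hy => hasDerivAt_tsum_of_isPreconnected hus hto htc hgd hbound h0t hg0 hy
  set F : ℝ → ℝ := fun z => ∑' n, g n z with hFdef
  -- functional equation
  have key : ∀ x ∈ t, (1 - x) * (∑' n, g' n x) = γ * F x := by
    intro x hx
    have hDs : Summable fun n => g' n x :=
      Summable.of_norm_bounded hus fun n => hbound n x hx
    have hshift : Summable fun n => g' (n+1) x := by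
      rw [← summable_nat_add_iff 1] at hDs
      exact hDs
    have hD1 : (∑' n, g' n x) = ∑' n, c n * (γ + n) * x ^ n := by
      rw [hDs.tsum_eq_zero_add]
      have h0 : g' 0 x = 0 := by simp [hg']
      rw [h0, zero_add]
      refine tsum_congr fun n => ?_
      simp only [hg', Nat.add_sub_cancel, Nat.cast_add, Nat.cast_one]
      linear_combination x ^ n * hcsucc n
    have hS1 : Summable fun n => c n * (γ + n) * x ^ n := by
      refine hshift.congr fun n => ?_
      simp only [hg', Nat.add_sub_cancel, Nat.cast_add, Nat.cast_one]
      linear_combination x ^ n * hcsucc n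
    have hS2 : Summable fun n => c n * (n:ℝ) * x ^ n := by
      refine (hDs.mul_left x).congr fun n => ?_
      show x * (c n * ((n:ℝ) * x ^ (n-1))) = c n * (n:ℝ) * x ^ n
      rcases n with _ | m
      · simp
      · rw [Nat.add_sub_cancel, pow_succ]
        ring
    have hxD : x * (∑' n, g' n x) = ∑' n, c n * (n:ℝ) * x ^ n := by
      rw [← tsum_mul_left]
      refine tsum_congr fun n => ?_
      show x * (c n * ((n:ℝ) * x ^ (n-1))) = c n * (n:ℝ) * x ^ n
      rcases n with _ | m
      · simp
      · rw [Nat.add_sub_cancel, pow_succ]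
        ring
    have hsub : (1 - x) * (∑' n, g' n x) = (∑' n, c n * (γ + n) * x ^ n) - ∑' n, c n * (n:ℝ) * x ^ n := by
      rw [sub_mul, one_mul, hxD, hD1]
    rw [hsub, ← hS1.tsum_sub hS2]
    have : ∀ n : ℕ, c n * (γ + n) * x ^ n - c n * (n:ℝ) * x ^ n = γ * (c n * x ^ n) := by
      intro n; ring
    rw [tsum_congr this, tsum_mul_left]
  -- the product with (1-x)^γ has zero derivative
  have hGd : ∀ x ∈ t, HasDerivAt (fun z => F z * (1 - z) ^ γ) 0 x := by
    intro x hx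
    have h1x : (0:ℝ) < 1 - x := by
      have := hx.2
      simp only [ht, Set.mem_Ioo] at hx
      linarith [hx.2, hb1]
    have hpow := Real.hasDerivAt_rpow_const (x := 1 - x) (p := γ) (Or.inl h1x.ne')
    have hlin : HasDerivAt (fun z : ℝ => 1 - z) (-1) x := (hasDerivAt_id x).const_sub 1
    have hcomp : HasDerivAt (fun z : ℝ => (1 - z) ^ γ) (γ * (1 - x) ^ (γ - 1) * (-1)) x :=
      HasDerivAt.comp x hpow hlin
    have hmul := (hF x hx).mul hcomp
    have hval : (∑' n, g' n x) * (1 - x) ^ γ + F x * (γ * (1 - x) ^ (γ - 1) * (-1)) = 0 := by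
      have hsplit : (1 - x) ^ γ = (1 - x) ^ (γ - 1) * (1 - x) := by
        rw [Real.rpow_sub_one h1x.ne']
        field_simp
      rw [hsplit]
      have hk := key x hx
      linear_combination (1 - x) ^ (γ - 1) * hk
    rw [hval] at hmul
    exact hmul
  -- constancy
  have hconst : F α * (1 - α) ^ γ = F 0 * (1 - (0:ℝ)) ^ γ := by
    have hαt : α ∈ t := ⟨by linarith, hαb⟩
    set G : ℝ → ℝ := fun z => F z * (1 - z) ^ γ with hGdef
    have hdiff : DifferentiableOn ℝ G t := fun x hx =>
      ((hGd x hx).differentiableAt).differentiableWithinAt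
    have hfd : ∀ x ∈ t, fderivWithin ℝ G t x = 0 := by
      intro x hx
      rw [fderivWithin_of_isOpen hto hx]
      have h := (hGd x hx).hasFDerivAt.fderiv
      rw [h]
      ext z
      simp
    exact (convex_Ioo _ _).is_const_of_fderivWithin_eq_zero hdiff hfd hαt h0t
  have hF0 : F 0 = 1 := by
    show (∑' n, g n (0:ℝ)) = 1
    rw [tsum_eq_single 0 ?_]
    · simp [hg, hc, poch_zero]
    · intro n hn
      rcases Nat.exists_eq_succ_of_ne_zero hn with ⟨m, rfl⟩
      simp [hg]
  have h1α : (0:ℝ) < 1 - α := by linarith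
  have hFα : F α = (1 - α) ^ (-γ) := by
    have h2 : F α * (1 - α) ^ γ = 1 := by
      rw [hconst, hF0]
      simp
    have h3 : (1 - α) ^ γ ≠ 0 := by
      positivity
    rw [Real.rpow_neg h1α.le, ← one_div]
    exact eq_div_of_mul_eq h3 h2
  have hsummα : Summable fun n => g n α := by
    refine (summable_aux hγ 0 hα0 hα1).congr fun n => ?_
    simp only [hg, hc, pow_zero, mul_one]
  have heq : (fun k : ℕ => α ^ k * poch γ k / (Nat.factorial k)) = fun n => g n α := by
    funext k
    simp only [hg, hc]
    ring
  rw [heq, ← hFα]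
  exact hsummα.hasSum

lemma stirling2_eq_zero : ∀ n k : ℕ, n < k → stirling2 n k = 0 := by
  intro n
  induction n with
  | zero => intro k hk; match k, hk with
            | k+1, _ => rfl
  | succ m ih =>
    intro k hk
    match k, hk with
    | k+1, hk =>
      show (k+1) * stirling2 m (k+1) + stirling2 m k = 0
      rw [ih (k+1) (by omega), ih k (by omega)]
      simp

lemma pow_eq_sum_stirling (m k : ℕ) :
    (k : ℝ) ^ m = ∑ l ∈ Finset.range (m+1), (stirling2 m l : ℝ) * (k.descFactorial l : ℝ) := by
  induction m with
  | zero => simp [stirling2]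
  | succ m ih =>
    have hstep : ∀ l : ℕ, (k : ℝ) * (k.descFactorial l : ℝ)
        = (k.descFactorial (l+1) : ℝ) + l * (k.descFactorial l : ℝ) := by
      intro l
      rcases le_or_gt (l+1) k with h | h
      · rw [Nat.descFactorial_succ]
        have h1 : ((k - l : ℕ) : ℝ) = (k : ℝ) - l := by
          rw [Nat.cast_sub (by omega)]
        push_cast
        rw [h1]
        ring
      · rcases Nat.lt_or_ge k l with h2 | h2
        · have e1 : k.descFactorial l = 0 := Nat.descFactorial_eq_zero_iff_lt.2 h2
          have e2 : k.descFactorial (l+1) = 0 := Nat.descFactorial_eq_zero_iff_lt.2 (by omega)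
          rw [e1, e2]
          simp
        · have hkl : k = l := by omega
          subst hkl
          have e2 : k.descFactorial (k+1) = 0 := Nat.descFactorial_eq_zero_iff_lt.2 (by omega)
          rw [e2]
          simp
    have hrec : ∀ l : ℕ, (stirling2 (m+1) (l+1) : ℝ)
        = ((l:ℝ)+1) * (stirling2 m (l+1) : ℝ) + (stirling2 m l : ℝ) := by
      intro l
      show (((l+1) * stirling2 m (l+1) + stirling2 m l : ℕ) : ℝ) = _
      push_cast
      ring
    set A : ℕ → ℝ := fun l => (stirling2 m l : ℝ) * (k.descFactorial (l+1) : ℝ) with hA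
    set B : ℕ → ℝ := fun l => (l : ℝ) * (stirling2 m l : ℝ) * (k.descFactorial l : ℝ) with hB
    have e1 : ∑ l ∈ Finset.range (m+2), (stirling2 (m+1) l : ℝ) * (k.descFactorial l : ℝ)
        = ∑ l ∈ Finset.range (m+1), (stirling2 (m+1) (l+1) : ℝ) * (k.descFactorial (l+1) : ℝ) := by
      rw [Finset.sum_range_succ' (fun l => (stirling2 (m+1) l : ℝ) * (k.descFactorial l : ℝ)) (m+1)]
      norm_num [stirling2]
    have e2 : ∑ l ∈ Finset.range (m+1), (stirling2 (m+1) (l+1) : ℝ) * (k.descFactorial (l+1) : ℝ)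
        = (∑ l ∈ Finset.range (m+1), ((l:ℝ)+1) * (stirling2 m (l+1) : ℝ) * (k.descFactorial (l+1) : ℝ))
          + ∑ l ∈ Finset.range (m+1), A l := by
      rw [← Finset.sum_add_distrib]
      refine Finset.sum_congr rfl fun l _ => ?_
      rw [hrec l, hA]
      ring
    have e3 : ∑ l ∈ Finset.range (m+1), ((l:ℝ)+1) * (stirling2 m (l+1) : ℝ) * (k.descFactorial (l+1) : ℝ)
        = ∑ l ∈ Finset.range (m+1), B l := by
      have t1 := Finset.sum_range_succ' B (m+1)
      have t2 := Finset.sum_range_succ B (m+1)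
      have hBtop : B (m+1) = 0 := by
        rw [hB]
        simp [stirling2_eq_zero m (m+1) (by omega)]
      have hB0 : B 0 = 0 := by simp [hB]
      have t3 : ∑ l ∈ Finset.range (m+1), B (l+1) = ∑ l ∈ Finset.range (m+1), B l := by
        rw [hB0, add_zero] at t1
        rw [hBtop, add_zero] at t2
        rw [← t1, t2]
      rw [← t3]
      refine Finset.sum_congr rfl fun l _ => ?_
      rw [hB]
      push_cast
      ring
    have main : (k : ℝ) ^ (m+1)
        = (∑ l ∈ Finset.range (m+1), A l) + ∑ l ∈ Finset.range (m+1), B l := by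
      have : (k : ℝ) ^ (m+1) = (k:ℝ) * (k:ℝ)^m := by ring
      rw [this, ih, Finset.mul_sum, ← Finset.sum_add_distrib]
      refine Finset.sum_congr rfl fun l _ => ?_
      simp only [hA, hB]
      linear_combination (stirling2 m l : ℝ) * hstep l
    rw [main, e1, e2, e3]
    ring

lemma hasSum_shift {γ : ℝ} (hγ : 0 < γ) {α : ℝ} (hα0 : 0 < α) (hα1 : α < 1) (l : ℕ) :
    HasSum (fun k : ℕ => α ^ k * poch γ k * (k.descFactorial l : ℝ) / (Nat.factorial k))
      (poch γ l * (α / (1-α))^l * (1-α) ^ (-γ)) := by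
  have h1α : (0:ℝ) < 1 - α := by linarith
  have hβ : (0:ℝ) < γ + l := by positivity
  have hb := hasSum_binom hβ hα0 hα1
  have hb2 := hb.mul_left (α ^ l * poch γ l)
  set f : ℕ → ℝ := fun k => α ^ k * poch γ k * (k.descFactorial l : ℝ) / (Nat.factorial k) with hf
  have hd : ∀ j : ℕ, ((Nat.factorial j : ℕ) : ℝ) * (((j+l).descFactorial l : ℕ) : ℝ)
      = ((Nat.factorial (j+l) : ℕ) : ℝ) := by
    intro j
    have h := Nat.factorial_mul_descFactorial (Nat.le_add_left l j)
    rw [Nat.add_sub_cancel] at h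
    exact_mod_cast congrArg (Nat.cast : ℕ → ℝ) h
  have heq : ∀ j : ℕ, (α ^ l * poch γ l) * (α ^ j * poch (γ + l) j / (Nat.factorial j))
      = f (j + l) := by
    intro j
    simp only [hf]
    have e : poch γ (j+l) = poch γ l * poch (γ + l) j := by
      rw [add_comm j l, poch_add]
    rw [e, pow_add]
    have hj : ((Nat.factorial j : ℕ) : ℝ) ≠ 0 := by positivity
    have hjl : ((Nat.factorial (j+l) : ℕ) : ℝ) ≠ 0 := by positivity
    field_simp
    linear_combination (-(1:ℝ) * poch γ l * poch (γ + (l:ℝ)) j) * hd j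
  have hshift : HasSum (fun j => f (j + l)) ((α ^ l * poch γ l) * (1-α) ^ (-(γ + l))) :=
    hb2.congr_fun fun j => (heq j).symm
  rw [hasSum_nat_add_iff l] at hshift
  have hzero : ∑ i ∈ Finset.range l, f i = 0 := by
    apply Finset.sum_eq_zero
    intro i hi
    simp only [hf]
    rw [Nat.descFactorial_eq_zero_iff_lt.2 (Finset.mem_range.1 hi)]
    simp
  rw [hzero, add_zero] at hshift
  have hval : (α ^ l * poch γ l) * (1-α) ^ (-(γ + (l:ℝ)))
      = poch γ l * (α / (1-α))^l * (1-α) ^ (-γ) := by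
    rw [neg_add, Real.rpow_add h1α, Real.rpow_neg h1α.le (l:ℝ), Real.rpow_natCast, div_pow,
      div_eq_mul_inv]
    ring
  rw [hval] at hshift
  exact hshift

/-- For `m ∈ ℤ_{≥0}`, `0 < α < 1`, `γ > 0`:
`∑_{k=0}^∞ α^k (γ)_k/k! · k^m = (1−α)^{−γ} ∑_{l=0}^m S(m,l) (γ)_l (α/(1−α))^l`,
the left-hand series being absolutely convergent (with `0^0 = 1`). -/
theorem powerSum_eq_stirlingSum (m : ℕ) (α γ : ℝ) (hα0 : 0 < α) (hα1 : α < 1) (hγ : 0 < γ) :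
    Summable (fun k : ℕ => |α^k * poch γ k / (Nat.factorial k) * (k : ℝ)^m|) ∧
    ∑' k : ℕ, α^k * poch γ k / (Nat.factorial k) * (k : ℝ)^m
      = (1 - α) ^ (-γ) *
        ∑ l ∈ Finset.range (m+1), (stirling2 m l : ℝ) * poch γ l * (α/(1-α))^l := by
  have key : ∀ l : ℕ, HasSum
      (fun k : ℕ => (stirling2 m l : ℝ) * (α ^ k * poch γ k * (k.descFactorial l : ℝ) / (Nat.factorial k)))
      ((stirling2 m l : ℝ) * (poch γ l * (α / (1-α))^l * (1-α) ^ (-γ))) :=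
    fun l => (hasSum_shift hγ hα0 hα1 l).mul_left _
  have htot : HasSum
      (fun k : ℕ => ∑ l ∈ Finset.range (m+1),
        (stirling2 m l : ℝ) * (α ^ k * poch γ k * (k.descFactorial l : ℝ) / (Nat.factorial k)))
      (∑ l ∈ Finset.range (m+1),
        (stirling2 m l : ℝ) * (poch γ l * (α / (1-α))^l * (1-α) ^ (-γ))) :=
    hasSum_sum fun l _ => key l
  have heqfun : ∀ k : ℕ, ∑ l ∈ Finset.range (m+1),
      (stirling2 m l : ℝ) * (α ^ k * poch γ k * (k.descFactorial l : ℝ) / (Nat.factorial k))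
      = α^k * poch γ k / (Nat.factorial k) * (k : ℝ)^m := by
    intro k
    rw [pow_eq_sum_stirling m k, Finset.mul_sum]
    refine Finset.sum_congr rfl fun l _ => ?_
    ring
  have hmain : HasSum (fun k : ℕ => α^k * poch γ k / (Nat.factorial k) * (k : ℝ)^m)
      (∑ l ∈ Finset.range (m+1),
        (stirling2 m l : ℝ) * (poch γ l * (α / (1-α))^l * (1-α) ^ (-γ))) :=
    htot.congr_fun fun k => (heqfun k).symm
  have hnn : ∀ k : ℕ, 0 ≤ α^k * poch γ k / (Nat.factorial k) * (k : ℝ)^m := by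
    intro k
    have := poch_nonneg hγ k
    positivity
  constructor
  · exact hmain.summable.congr fun k => (abs_of_nonneg (hnn k)).symm
  · rw [hmain.tsum_eq, Finset.mul_sum]
    refine Finset.sum_congr rfl fun l _ => ?_
    ring
end

section
/- Let 0 ≤ α < 1, γ > 0, x > 0 and c < 1. Then the absolutely convergent integral (1/(2π)) ∫_{−∞}^{∞} ((1−α)x)^{−γ(c+iy)} Γ((1−α)^{−1} − c − iy) dy equals ((1−α)x)^{−γ/(1−α)} exp(−((1−α)x)^{−γ}), where the complex power is ((1−α)x)^{w} := exp(w · ln((1−α)x)) with the real logarithm, and Γ is the complex Gamma function. Consequently (γ/x) times this quantity divided by Γ(1/(1−α)) equals γ (1−α)^{−γ/(1−α)} Γ(1/(1−α))^{−1} x^{−1−γ/(1−α)} e^{−(1−α)^{−γ} x^{−γ}}, which is the first-order approximation to the α-Sun density. -/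
open MeasureTheory Complex Set

lemma my_norm_Gamma_le {s : ℂ} (hs : 0 < s.re) :
    ‖Complex.Gamma s‖ ≤ Real.Gamma s.re := by
  rw [Complex.Gamma_eq_integral hs, Real.Gamma_eq_integral hs, Complex.GammaIntegral]
  refine (norm_integral_le_integral_norm _).trans_eq ?_
  refine setIntegral_congr_fun measurableSet_Ioi fun t ht => ?_
  rw [norm_mul, Complex.norm_real, Real.norm_of_nonneg (Real.exp_pos _).le,
    Complex.norm_cpow_eq_rpow_re_of_pos ht]
  simp

lemma my_gamma_vert_integrable {b : ℝ} (hb : 0 < b) :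
    Integrable fun y : ℝ => Complex.Gamma (↑b + ↑y * I) := by
  have hne : ∀ y : ℝ, ∀ m : ℕ, (↑b + ↑y * I : ℂ) ≠ -m := by
    intro y m h
    have := congrArg Complex.re h
    simp at this
    have : (m:ℝ) ≥ 0 := Nat.cast_nonneg m
    linarith
  have hcont : Continuous fun y : ℝ => Complex.Gamma (↑b + ↑y * I) := by
    refine continuous_iff_continuousAt.mpr fun y => ?_
    have h := ContinuousAt.comp (f := fun y : ℝ => (↑b + ↑y * I : ℂ))
      (Complex.differentiableAt_Gamma _ (hne y)).continuousAt (by fun_prop)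
    exact h
  set m : ℝ := min b 1 with hmdef
  have hm0 : 0 < m := lt_min hb one_pos
  refine (integrable_inv_one_add_sq.const_mul (Real.Gamma (b+2) / m)).mono'
    hcont.aestronglyMeasurable (ae_of_all _ fun y => ?_)
  set s : ℂ := ↑b + ↑y * I with hs
  have hs0 : s ≠ 0 := by
    intro h
    exact hne y 0 (by simpa using h)
  have h1 : s + 1 ≠ 0 := by
    intro h
    have := congrArg Complex.re h
    simp [hs] at this
    linarith
  have key : Complex.Gamma s = Complex.Gamma (s + 1 + 1) / ((s + 1) * s) := by
    rw [Complex.Gamma_add_one _ h1, Complex.Gamma_add_one _ hs0]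
    field_simp
  have hre : (s + 1 + 1).re = b + 2 := by simp [hs]; ring
  have hnorm : ‖Complex.Gamma (s + 1 + 1)‖ ≤ Real.Gamma (b + 2) := by
    have := my_norm_Gamma_le (s := s + 1 + 1) (by rw [hre]; linarith)
    rwa [hre] at this
  have habs : m * (1 + y ^ 2) ≤ ‖(s + 1) * s‖ := by
    have h2 : ‖s‖ = Real.sqrt (b ^ 2 + y ^ 2) := by
      rw [hs, Complex.norm_add_mul_I]
    have h3 : ‖s + 1‖ = Real.sqrt ((b + 1) ^ 2 + y ^ 2) := by
      have : s + 1 = ↑(b + 1) + ↑y * I := by push_cast [hs]; ring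
      rw [this, Complex.norm_add_mul_I]
    rw [norm_mul, h2, h3, ← Real.sqrt_mul (by positivity)]
    rw [show m * (1 + y ^ 2) = Real.sqrt ((m * (1 + y ^ 2)) ^ 2) from
      (Real.sqrt_sq (by positivity)).symm]
    apply Real.sqrt_le_sqrt
    have hmb : m ≤ b := min_le_left _ _
    have hm1 : m ≤ 1 := min_le_right _ _
    have e1 : m * m ≤ b * b := mul_le_mul hmb hmb hm0.le hb.le
    have e2 : m * m ≤ 1 := by nlinarith
    nlinarith [sq_nonneg y, sq_nonneg (y ^ 2), hb.le, mul_nonneg hb.le hb.le,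
      mul_nonneg (mul_nonneg hb.le hb.le) hb.le, sq_nonneg (y * b)]
  calc ‖Complex.Gamma s‖ = ‖Complex.Gamma (s + 1 + 1)‖ / ‖(s + 1) * s‖ := by
        rw [key, norm_div]
    _ ≤ Real.Gamma (b + 2) / (m * (1 + y ^ 2)) := by
        apply div_le_div₀ (Real.Gamma_pos_of_pos (by linarith)).le hnorm (by positivity) habs
    _ = Real.Gamma (b + 2) / m * (1 + y ^ 2)⁻¹ := by
        have hy : (1 : ℝ) + y ^ 2 ≠ 0 := by positivity
        field_simp

set_option maxHeartbeats 400000 in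
lemma my_cahen_mellin {b z : ℝ} (hb : 0 < b) (hz : 0 < z) :
    ((1 : ℝ) / (2 * Real.pi)) • ∫ y : ℝ, (z : ℂ) ^ (-(↑b + ↑y * I)) • Complex.Gamma (↑b + ↑y * I)
      = Complex.exp (-z) := by
  have hmel : mellin (fun t : ℝ => (Real.exp (-t) : ℂ)) = Complex.GammaIntegral :=
    Complex.GammaIntegral_eq_mellin.symm
  have h1 : MellinConvergent (fun t : ℝ => (Real.exp (-t) : ℂ)) b := by
    have h := Complex.GammaIntegral_convergent (show 0 < (b : ℂ).re by simpa using hb)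
    rw [MellinConvergent]
    refine h.congr_fun (fun t ht => ?_) measurableSet_Ioi
    simp [smul_eq_mul, mul_comm]
  have h2 : Complex.VerticalIntegrable (mellin fun t : ℝ => (Real.exp (-t) : ℂ)) b := by
    rw [hmel]
    refine (my_gamma_vert_integrable hb).congr (Filter.Eventually.of_forall fun y => ?_)
    exact Complex.Gamma_eq_integral (s := ↑b + ↑y * I) (by simpa using hb)
  have hinv := mellinInv_mellin_eq b (fun t : ℝ => (Real.exp (-t) : ℂ)) hz h1 h2 (by fun_prop)
  rw [mellinInv, hmel] at hinv
  have hG : ∀ y : ℝ, Complex.GammaIntegral (↑b + ↑y * I) = Complex.Gamma (↑b + ↑y * I) := by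
    intro y
    rw [Complex.Gamma_eq_integral (s := ↑b + ↑y * I) (by simpa using hb)]
  have hint : (∫ y : ℝ, (z : ℂ) ^ (-(↑b + ↑y * I)) • Complex.Gamma (↑b + ↑y * I))
      = ∫ y : ℝ, (z : ℂ) ^ (-(↑b + ↑y * I)) • Complex.GammaIntegral (↑b + ↑y * I) := by
    refine integral_congr_ae (Filter.Eventually.of_forall fun y => ?_)
    simp only []
    rw [hG y]
  rw [hint, hinv]
  simp [Complex.ofReal_exp]

open MeasureTheory Complex in
/-- For `0 ≤ α < 1`, `γ > 0`, `x > 0`, `c < 1`, the absolutely convergent contour integral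
`(1/2π) ∫_ℝ ((1−α)x)^{−γ(c+iy)} Γ((1−α)^{−1} − c − iy) dy` equals
`((1−α)x)^{−γ/(1−α)} exp(−((1−α)x)^{−γ})`, where `((1−α)x)^w := exp(w·ln((1−α)x))`.
Consequently `γ/x` times this quantity divided by `Γ(1/(1−α))` equals the first-order
approximation `γ (1−α)^{−γ/(1−α)} Γ(1/(1−α))^{−1} x^{−1−γ/(1−α)} e^{−(1−α)^{−γ}x^{−γ}}`. -/
theorem firstOrder_mellin_inversion (α γ x c : ℝ)
    (hα0 : 0 ≤ α) (hα1 : α < 1) (hγ : 0 < γ) (hx : 0 < x) (hc : c < 1) :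
    Integrable (fun y : ℝ =>
      Complex.exp ((-(γ : ℂ) * ((c : ℂ) + (y : ℂ) * Complex.I)) * (Real.log ((1-α)*x) : ℂ)) *
        Complex.Gamma ((((1-α)⁻¹ : ℝ) : ℂ) - (c : ℂ) - (y : ℂ) * Complex.I)) ∧
    (1/(2*(Real.pi : ℂ))) * ∫ y : ℝ,
        Complex.exp ((-(γ : ℂ) * ((c : ℂ) + (y : ℂ) * Complex.I)) * (Real.log ((1-α)*x) : ℂ)) *
          Complex.Gamma ((((1-α)⁻¹ : ℝ) : ℂ) - (c : ℂ) - (y : ℂ) * Complex.I)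
      = ((((1-α)*x) ^ (-γ/(1-α)) * Real.exp (-(((1-α)*x) ^ (-γ))) : ℝ) : ℂ) ∧
    γ / x * (((1-α)*x) ^ (-γ/(1-α)) * Real.exp (-(((1-α)*x) ^ (-γ)))) / Real.Gamma (1/(1-α))
      = γ * (1-α) ^ (-γ/(1-α)) * (Real.Gamma (1/(1-α)))⁻¹ * x ^ (-1-γ/(1-α)) *
          Real.exp (-((1-α) ^ (-γ)) * x ^ (-γ)) := by
  have hA : 0 < 1 - α := by linarith
  have hX : 0 < (1 - α) * x := mul_pos hA hx
  set L : ℝ := Real.log ((1 - α) * x) with hLdef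
  set a : ℝ := (1 - α)⁻¹ with hadef
  have ha1 : 1 ≤ a := (one_le_inv₀ hA).2 (by linarith)
  set b : ℝ := a - c with hbdef
  have hb : 0 < b := by rw [hbdef]; linarith
  set z : ℝ := Real.exp (-(γ * L)) with hzdef
  have hz0 : 0 < z := Real.exp_pos _
  have hzc : (z : ℂ) ≠ 0 := Complex.ofReal_ne_zero.mpr hz0.ne'
  set K : ℂ := Complex.exp (-((γ : ℂ) * (a : ℂ) * (L : ℂ))) with hKdef
  -- pointwise identity
  have hbC : (b : ℂ) = (a : ℂ) - (c : ℂ) := by rw [hbdef]; push_cast; ring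
  have hlogz : Complex.log (z : ℂ) = ((-(γ * L) : ℝ) : ℂ) := by
    rw [← Complex.ofReal_log hz0.le, hzdef, Real.log_exp]
  have hpt : ∀ y : ℝ,
      Complex.exp ((-(γ : ℂ) * ((c : ℂ) + (y : ℂ) * I)) * (L : ℂ)) *
        Complex.Gamma (((a : ℝ) : ℂ) - (c : ℂ) - (y : ℂ) * I)
      = K * (z : ℂ) ^ (-((b : ℂ) + ((-y : ℝ) : ℂ) * I)) *
          Complex.Gamma ((b : ℂ) + ((-y : ℝ) : ℂ) * I) := by
    intro y
    have harg : ((a : ℝ) : ℂ) - (c : ℂ) - (y : ℂ) * I = (b : ℂ) + ((-y : ℝ) : ℂ) * I := by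
      rw [hbC]; push_cast; ring
    rw [harg]
    congr 1
    rw [hKdef, Complex.cpow_def_of_ne_zero hzc, hlogz, ← Complex.exp_add]
    congr 1
    rw [hbC]
    push_cast
    ring
  -- integrability of the model function
  have hGint : Integrable (fun y : ℝ =>
      (K * (z : ℂ) ^ (-((b : ℂ) + (y : ℂ) * I))) * Complex.Gamma ((b : ℂ) + (y : ℂ) * I)) := by
    refine (my_gamma_vert_integrable hb).bdd_mul (c := ‖K‖ * z ^ (-b)) ?_ ?_
    · apply Continuous.aestronglyMeasurable
      exact continuous_const.mul (Continuous.const_cpow (by fun_prop) (Or.inl hzc))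
    · refine ae_of_all _ fun y => ?_
      rw [norm_mul]
      apply mul_le_mul_of_nonneg_left _ (norm_nonneg K)
      rw [Complex.norm_cpow_eq_rpow_re_of_pos hz0]
      apply le_of_eq
      congr 1
      simp
  refine ⟨?_, ?_, ?_⟩
  · -- integrability
    refine (hGint.comp_neg).congr (Filter.Eventually.of_forall fun y => ?_)
    simp only []
    exact (hpt y).symm
  · -- the integral identity
    have hflip : (∫ y : ℝ,
        Complex.exp ((-(γ : ℂ) * ((c : ℂ) + (y : ℂ) * I)) * (L : ℂ)) *
          Complex.Gamma (((a : ℝ) : ℂ) - (c : ℂ) - (y : ℂ) * I))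
        = ∫ y : ℝ, (K * (z : ℂ) ^ (-((b : ℂ) + (y : ℂ) * I))) *
            Complex.Gamma ((b : ℂ) + (y : ℂ) * I) := by
      rw [← integral_neg_eq_self (fun y : ℝ => (K * (z : ℂ) ^ (-((b : ℂ) + (y : ℂ) * I))) *
            Complex.Gamma ((b : ℂ) + (y : ℂ) * I)) volume]
      refine integral_congr_ae (Filter.Eventually.of_forall fun y => ?_)
      simp only []
      exact hpt y
    rw [hflip]
    have hcm := my_cahen_mellin hb hz0
    have hsm : ((1 : ℝ) / (2 * Real.pi)) •
        (∫ y : ℝ, (z : ℂ) ^ (-((b : ℂ) + (y : ℂ) * I)) • Complex.Gamma ((b : ℂ) + (y : ℂ) * I))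
        = (1/(2*(Real.pi : ℂ))) *
          ∫ y : ℝ, (z : ℂ) ^ (-((b : ℂ) + (y : ℂ) * I)) * Complex.Gamma ((b : ℂ) + (y : ℂ) * I) := by
      simp_rw [smul_eq_mul]
      rw [Complex.real_smul]
      push_cast
      ring
    rw [hsm] at hcm
    have : (∫ y : ℝ, (K * (z : ℂ) ^ (-((b : ℂ) + (y : ℂ) * I))) *
        Complex.Gamma ((b : ℂ) + (y : ℂ) * I))
        = K * ∫ y : ℝ, (z : ℂ) ^ (-((b : ℂ) + (y : ℂ) * I)) * Complex.Gamma ((b : ℂ) + (y : ℂ) * I) := by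
      simp_rw [mul_assoc]
      exact integral_const_mul K _
    rw [this, show (1/(2*(Real.pi : ℂ))) * (K * ∫ y : ℝ,
        (z : ℂ) ^ (-((b : ℂ) + (y : ℂ) * I)) * Complex.Gamma ((b : ℂ) + (y : ℂ) * I))
        = K * ((1/(2*(Real.pi : ℂ))) * ∫ y : ℝ,
        (z : ℂ) ^ (-((b : ℂ) + (y : ℂ) * I)) * Complex.Gamma ((b : ℂ) + (y : ℂ) * I)) by ring,
      hcm]
    have e1 : ((1-α)*x) ^ (-γ/(1-α)) = Real.exp (-(γ * a * L)) := by
      rw [Real.rpow_def_of_pos hX, ← hLdef, hadef]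
      congr 1
      ring
    have e2 : ((1-α)*x) ^ (-γ) = z := by
      rw [Real.rpow_def_of_pos hX, ← hLdef, hzdef]
      congr 1
      ring
    rw [e1, e2, hKdef]
    push_cast
    rw [← Complex.exp_add]
  · -- real algebra
    have hxp : x ^ (-1 - γ/(1-α)) = x⁻¹ * x ^ (-γ/(1-α)) := by
      rw [show -1 - γ/(1-α) = (-1) + (-γ/(1-α)) by ring, Real.rpow_add hx, Real.rpow_neg_one]
    rw [Real.mul_rpow hA.le hx.le, Real.mul_rpow hA.le hx.le, hxp, neg_mul]
    ring
end
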